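/- For all quaternions a and q with ‖a‖ < 1 and ‖q‖ < 1, the quaternion q²‖a‖² − 2·Re(a)·q + 1 is nonzero. -/

import Mathlib

/-- For all quaternions `a`, `q` with `‖a‖ < 1` and `‖q‖ < 1`, the quaternion
`q²‖a‖² − 2·Re(a)·q + 1` is nonzero. -/
theorem mobius_denominator_ne_zero (a q : Quaternion ℝ) (ha : ‖a‖ < 1) (hq : ‖q‖ < 1) :
    ‖a‖ ^ 2 • q ^ 2 - (2 * a.re) • q + 1 ≠ 0 := by
  intro h
  have hA : ‖a‖ ^ 2 = a.re ^ 2 + a.imI ^ 2 + a.imJ ^ 2 + a.imK ^ 2 := by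
    rw [sq, ← Quaternion.normSq_eq_norm_mul_self, Quaternion.normSq_def']
  have hQ : ‖q‖ ^ 2 = q.re ^ 2 + q.imI ^ 2 + q.imJ ^ 2 + q.imK ^ 2 := by
    rw [sq, ← Quaternion.normSq_eq_norm_mul_self, Quaternion.normSq_def']
  have ha0 : (0:ℝ) ≤ ‖a‖ := norm_nonneg a
  have hq0 : (0:ℝ) ≤ ‖q‖ := norm_nonneg q
  have hb1 : ‖a‖ ^ 2 < 1 := by nlinarith
  have hq2 : q.re ^ 2 + q.imI ^ 2 + q.imJ ^ 2 + q.imK ^ 2 < 1 := by rw [← hQ]; nlinarith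
  have hre2 : a.re ^ 2 ≤ ‖a‖ ^ 2 := by
    rw [hA]; nlinarith [sq_nonneg a.imI, sq_nonneg a.imJ, sq_nonneg a.imK]
  rw [Quaternion.ext_iff] at h
  simp only [pow_two, Quaternion.re_mul, Quaternion.imI_mul, Quaternion.imJ_mul,
    Quaternion.imK_mul, Quaternion.re_sub, Quaternion.imI_sub, Quaternion.imJ_sub,
    Quaternion.imK_sub, Quaternion.re_add, Quaternion.imI_add, Quaternion.imJ_add,
    Quaternion.imK_add, Quaternion.re_smul, Quaternion.imI_smul, Quaternion.imJ_smul,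
    Quaternion.imK_smul, Quaternion.re_one, Quaternion.imI_one, Quaternion.imJ_one,
    Quaternion.imK_one, Quaternion.re_zero, Quaternion.imI_zero, Quaternion.imJ_zero,
    Quaternion.imK_zero, smul_eq_mul] at h
  obtain ⟨h1, h2, h3, h4⟩ := h
  by_cases hc : ‖a‖ ^ 2 * q.re - a.re = 0
  · have hr : ‖a‖ ^ 2 * q.re = a.re := by linarith
    have key : ‖a‖ ^ 2 * (q.re ^ 2 + q.imI ^ 2 + q.imJ ^ 2 + q.imK ^ 2) = 1 := by
      linear_combination -h1 + 2 * q.re * hr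
    nlinarith [mul_nonneg (sub_nonneg.2 hb1.le)
      (by positivity : (0:ℝ) ≤ q.re ^ 2 + q.imI ^ 2 + q.imJ ^ 2 + q.imK ^ 2)]
  · have hi : q.imI * (‖a‖ ^ 2 * q.re - a.re) = 0 := by linear_combination h2 / 2
    have hj : q.imJ * (‖a‖ ^ 2 * q.re - a.re) = 0 := by linear_combination h3 / 2
    have hk : q.imK * (‖a‖ ^ 2 * q.re - a.re) = 0 := by linear_combination h4 / 2
    have hi0 : q.imI = 0 := (mul_eq_zero.1 hi).resolve_right hc
    have hj0 : q.imJ = 0 := (mul_eq_zero.1 hj).resolve_right hc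
    have hk0 : q.imK = 0 := (mul_eq_zero.1 hk).resolve_right hc
    rw [hi0, hj0, hk0] at h1 hq2
    have hqre : q.re ^ 2 < 1 := by linarith
    clear hi hj hk h2 h3 h4 hc hA hQ hq2 ha hq ha0 hq0
    nlinarith [sq_nonneg (a.re * q.re - 1),
      mul_nonneg (sub_nonneg.2 hre2) (sq_nonneg q.re),
      mul_nonneg (sub_nonneg.2 hb1.le) (sq_nonneg q.re)]
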